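/- Gauss's summation theorem: for complex a, b, c with Re(c-a-b) > 0 and c not a nonpositive integer, the sum over k ≥ 0 of ((a)_k (b)_k)/(k! (c)_k) equals Γ(c)Γ(c-a-b)/(Γ(c-a)Γ(c-b)). -/

import Mathlib

open Filter Finset Topology

/-- Rising factorial (Pochhammer symbol) `(x)_k = x(x+1)⋯(x+k-1)`. -/
noncomputable def poch (x : ℂ) (k : ℕ) : ℂ := ∏ i ∈ Finset.range k, (x + i)

lemma poch_zero (x : ℂ) : poch x 0 = 1 := by simp [poch]

lemma poch_succ (x : ℂ) (k : ℕ) : poch x (k + 1) = poch x k * (x + k) := by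
  simp [poch, Finset.prod_range_succ]

lemma poch_succ' (x : ℂ) (k : ℕ) : poch x (k + 1) = x * poch (x + 1) k := by
  rw [poch, poch, Finset.prod_range_succ', Nat.cast_zero, add_zero, mul_comm]
  congr 1
  exact Finset.prod_congr rfl fun i _ => by push_cast; ring

lemma poch_ne_zero {x : ℂ} (hx : ∀ i : ℕ, x + i ≠ 0) (k : ℕ) : poch x k ≠ 0 :=
  Finset.prod_ne_zero_iff.2 fun i _ => hx i

lemma norm_poch (x : ℂ) (k : ℕ) : ‖poch x k‖ = ∏ i ∈ Finset.range k, ‖x + i‖ := by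
  simp [poch]

lemma norm_poch_le (x : ℂ) (k : ℕ) :
    ‖poch x k‖ ≤ ∏ i ∈ Finset.range k, (‖x‖ + i) := by
  rw [norm_poch]
  refine Finset.prod_le_prod (fun i _ => norm_nonneg _) fun i _ => ?_
  calc ‖x + i‖ ≤ ‖x‖ + ‖(i : ℂ)‖ := norm_add_le _ _
  _ = ‖x‖ + i := by simp

noncomputable def Tm (a b c : ℂ) (k : ℕ) : ℂ :=
  poch a k * poch b k / ((k.factorial : ℂ) * poch c k)

lemma Tm_zero (a b c : ℂ) : Tm a b c 0 = 1 := by simp [Tm, poch_zero]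

lemma norm_Tm (a b c : ℂ) (k : ℕ) :
    ‖Tm a b c k‖ = ‖poch a k‖ * ‖poch b k‖ / ((k.factorial : ℝ) * ‖poch c k‖) := by
  simp [Tm, norm_div, norm_mul]

lemma Tm_succ {c : ℂ} (hC : ∀ i : ℕ, c + i ≠ 0) (a b : ℂ) (k : ℕ) :
    Tm a b c (k + 1) = Tm a b c k * ((a + k) * (b + k) / ((k + 1) * (c + k))) := by
  have h1 : poch c k ≠ 0 := poch_ne_zero hC k
  have h2 : (c + k) ≠ 0 := hC k
  have h3 : ((k.factorial : ℂ)) ≠ 0 := Nat.cast_ne_zero.2 k.factorial_ne_zero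
  have h4 : ((k : ℂ) + 1) ≠ 0 := by
    have := Nat.cast_ne_zero (R := ℂ).2 (Nat.succ_ne_zero k)
    push_cast at this; exact this
  rw [Tm, Tm, poch_succ a, poch_succ b, poch_succ c, Nat.factorial_succ]
  push_cast
  field_simp

lemma tendsto_norm_add_nat_div (z : ℂ) :
    Tendsto (fun k : ℕ => ‖z + k‖ / k) atTop (𝓝 1) := by
  have h0 : Tendsto (fun k : ℕ => z / k) atTop (𝓝 0) := by
    refine squeeze_zero_norm (fun k => ?_) (tendsto_const_div_atTop_nhds_zero_nat ‖z‖)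
    simp [norm_div]
  have h1 : Tendsto (fun k : ℕ => ‖z / k + 1‖) atTop (𝓝 1) := by
    have := ((h0.add (tendsto_const_nhds (x := (1:ℂ)))).norm)
    simpa using this
  refine Tendsto.congr' ?_ h1
  filter_upwards [eventually_ge_atTop 1] with k hk
  have hk0 : (k : ℂ) ≠ 0 := Nat.cast_ne_zero.2 (by omega)
  rw [show z / k + 1 = (z + k) / k by field_simp]
  rw [norm_div, Complex.norm_natCast]

lemma tendsto_norm_add_nat_sub (z : ℂ) :
    Tendsto (fun k : ℕ => ‖z + k‖ - k) atTop (𝓝 z.re) := by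
  set s : ℝ := z.re ^ 2 + z.im ^ 2 with hs
  have key : ∀ k : ℕ, 1 ≤ k → ‖z + k‖ - k = (2 * z.re + s / k) / (‖z + k‖ / k + 1) := by
    intro k hk
    have hk0 : (0 : ℝ) < k := by exact_mod_cast hk
    have hsq : ‖z + k‖ ^ 2 = (z.re + k) ^ 2 + z.im ^ 2 := by
      rw [Complex.sq_norm, Complex.normSq_apply]
      simp; ring
    have h2 : (‖z + k‖ - k) * (‖z + k‖ + k) = 2 * k * z.re + s := by
      have h3 : (‖z + k‖ - k) * (‖z + k‖ + k) = ‖z + k‖ ^ 2 - k ^ 2 := by ring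
      rw [h3, hsq, hs]; ring
    have hden2 : ‖z + k‖ / k + 1 ≠ 0 := by positivity
    rw [eq_div_iff hden2]
    field_simp
    linear_combination h2
  have hlim : Tendsto (fun k : ℕ => (2 * z.re + s / k) / (‖z + k‖ / k + 1)) atTop
      (𝓝 z.re) := by
    have hnum : Tendsto (fun k : ℕ => 2 * z.re + s / k) atTop (𝓝 (2 * z.re)) := by
      simpa using (tendsto_const_nhds.add (tendsto_const_div_atTop_nhds_zero_nat s))
    have hden : Tendsto (fun k : ℕ => ‖z + k‖ / k + 1) atTop (𝓝 2) := by
      have := (tendsto_norm_add_nat_div z).add (tendsto_const_nhds (x := (1:ℝ)))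
      simpa [one_add_one_eq_two] using this
    have := hnum.div hden (by norm_num)
    rw [show 2 * z.re / 2 = z.re by ring] at this; exact this
  refine Tendsto.congr' ?_ hlim
  filter_upwards [eventually_ge_atTop 1] with k hk
  exact (key k hk).symm

lemma tendsto_nat_mul_rpow_sub (e : ℝ) :
    Tendsto (fun k : ℕ => (k : ℝ) * ((1 + 1 / k) ^ e - 1)) atTop (𝓝 e) := by
  have h : HasDerivAt (fun x : ℝ => x ^ e) (e * (1:ℝ) ^ (e - 1)) 1 :=
    Real.hasDerivAt_rpow_const (Or.inl one_ne_zero)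
  rw [hasDerivAt_iff_tendsto_slope] at h
  have hg : Tendsto (fun k : ℕ => 1 + 1 / (k:ℝ)) atTop (𝓝[≠] 1) := by
    rw [tendsto_nhdsWithin_iff]
    constructor
    · simpa using (tendsto_const_nhds (x := (1:ℝ))).add
        (tendsto_one_div_atTop_nhds_zero_nat)
    · filter_upwards [eventually_ge_atTop 1] with k hk
      have : (0:ℝ) < 1 / k := by positivity
      simp only [Set.mem_compl_iff, Set.mem_singleton_iff]
      intro hcon
      nlinarith
  have := h.comp hg
  have heq : (fun k : ℕ => slope (fun x : ℝ => x ^ e) 1 (1 + 1 / k))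
      =ᶠ[atTop] fun k : ℕ => (k : ℝ) * ((1 + 1 / k) ^ e - 1) := by
    filter_upwards [eventually_ge_atTop 1] with k hk
    have hk0 : (k : ℝ) ≠ 0 := by positivity
    rw [slope_def_field]
    rw [Real.one_rpow]
    field_simp
    ring
  have h2 := Tendsto.congr' heq this
  simpa using h2

lemma Tm_bound {a b c : ℂ} {e : ℝ} (he : 0 < e) (hlt : e < (c - a - b).re)
    (hC : ∀ i : ℕ, c + i ≠ 0) :
    ∃ C : ℝ, ∀ᶠ k : ℕ in atTop, ‖Tm a b c k‖ ≤ C * (k : ℝ) ^ (-1 - e) := by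
  -- the quantity G k is eventually nonnegative
  have hG : Tendsto (fun k : ℕ =>
      ‖c + k‖ - (‖a + k‖ * ‖b + k‖ / k) * (1 + 1 / k) ^ e) atTop
      (𝓝 (c.re - (a.re + b.re) - e)) := by
    have hT2 : Tendsto (fun k : ℕ => ‖a + k‖ * ‖b + k‖ / k - k) atTop
        (𝓝 (a.re + b.re)) := by
      have h1 : Tendsto (fun k : ℕ =>
          (‖a + k‖ - k) * (‖b + k‖ - k) * (1 / k) + ((‖a + k‖ - k) + (‖b + k‖ - k)))
          atTop (𝓝 (a.re + b.re)) := by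
        have := (((tendsto_norm_add_nat_sub a).mul (tendsto_norm_add_nat_sub b)).mul
          tendsto_one_div_atTop_nhds_zero_nat).add
          ((tendsto_norm_add_nat_sub a).add (tendsto_norm_add_nat_sub b))
        simpa using this
      refine Tendsto.congr' ?_ h1
      filter_upwards [eventually_ge_atTop 1] with k hk
      have hk0 : (k : ℝ) ≠ 0 := by positivity
      field_simp
      ring
    have hT3 : Tendsto (fun k : ℕ =>
        (‖a + k‖ * ‖b + k‖ / k) * ((1 + 1 / k) ^ e - 1)) atTop (𝓝 e) := by
      have h1 : Tendsto (fun k : ℕ =>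
          (‖a + k‖ / k) * (‖b + k‖ / k) * ((k : ℝ) * ((1 + 1 / k) ^ e - 1)))
          atTop (𝓝 e) := by
        have := ((tendsto_norm_add_nat_div a).mul (tendsto_norm_add_nat_div b)).mul
          (tendsto_nat_mul_rpow_sub e)
        simpa using this
      refine Tendsto.congr' ?_ h1
      filter_upwards [eventually_ge_atTop 1] with k hk
      have hk0 : (k : ℝ) ≠ 0 := by positivity
      field_simp
    have h := (tendsto_norm_add_nat_sub c).sub (hT2.add hT3)
    refine Tendsto.congr ?_ (by convert h using 2; ring)
    intro k
    ring
  have hpos : 0 < c.re - (a.re + b.re) - e := by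
    have : (c - a - b).re = c.re - a.re - b.re := by simp
    linarith [hlt, this ▸ hlt]
  have hGev : ∀ᶠ k : ℕ in atTop,
      0 ≤ ‖c + k‖ - (‖a + k‖ * ‖b + k‖ / k) * (1 + 1 / k) ^ e :=
    (hG.eventually (eventually_gt_nhds hpos |>.mono fun x hx => le_of_lt hx)).mono
      fun k hk => hk
  -- step inequality
  have hstep : ∀ᶠ k : ℕ in atTop,
      ‖Tm a b c (k + 1)‖ ≤ ‖Tm a b c k‖ *
        (((k : ℝ) + 1) ^ (-1 - e) / (k : ℝ) ^ (-1 - e)) := by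
    filter_upwards [hGev, eventually_ge_atTop 1] with k hGk hk
    have hk0 : (0:ℝ) < k := by exact_mod_cast hk
    have hk10 : (0:ℝ) < (k:ℝ) + 1 := by linarith
    have hcc : (0:ℝ) < ‖c + k‖ := norm_pos_iff.2 (hC k)
    -- key : ‖a+k‖‖b+k‖ (k+1)^e ≤ k^(1+e) ‖c+k‖
    have key : ‖a + k‖ * ‖b + k‖ * ((k:ℝ) + 1) ^ e ≤ (k:ℝ) ^ (1 + e) * ‖c + k‖ := by
      have h1 : (‖a + k‖ * ‖b + k‖ / k) * (1 + 1 / k) ^ e ≤ ‖c + k‖ := by linarith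
      have h2 := mul_le_mul_of_nonneg_left h1 (le_of_lt (Real.rpow_pos_of_pos hk0 (1 + e)))
      calc ‖a + k‖ * ‖b + k‖ * ((k:ℝ) + 1) ^ e
          = (k:ℝ) ^ (1 + e) * ((‖a + k‖ * ‖b + k‖ / k) * (1 + 1 / k) ^ e) := by
            rw [Real.rpow_add hk0, Real.rpow_one]
            rw [show ((k:ℝ) + 1) ^ e = ((k:ℝ) * (1 + 1/k)) ^ e by
              congr 1; field_simp]
            rw [Real.mul_rpow (le_of_lt hk0) (by positivity)]
            field_simp
        _ ≤ (k:ℝ) ^ (1 + e) * ‖c + k‖ := h2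
    -- now convert to the ratio inequality
    rw [Tm_succ hC a b k, norm_mul, norm_div, norm_mul, norm_mul]
    have hnk1 : ‖(k : ℂ) + 1‖ = (k : ℝ) + 1 := by
      rw [show ((k:ℂ) + 1) = ((k+1 : ℕ) : ℂ) by push_cast; ring, Complex.norm_natCast]
      push_cast; ring
    rw [hnk1]
    apply mul_le_mul_of_nonneg_left _ (norm_nonneg _)
    have hrw : ((k:ℝ)+1) ^ (-1-e) = (((k:ℝ)+1) ^ (1+e))⁻¹ := by
      rw [← Real.rpow_neg (le_of_lt hk10)]; congr 1; ring
    have hrw2 : ((k:ℝ)) ^ (-1-e) = (((k:ℝ)) ^ (1+e))⁻¹ := by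
      rw [← Real.rpow_neg (le_of_lt hk0)]; congr 1; ring
    rw [hrw, hrw2, inv_div_inv]
    rw [div_le_div_iff₀ (by positivity) (Real.rpow_pos_of_pos hk10 _)]
    have hsplit : ((k:ℝ)+1) ^ (1+e) = ((k:ℝ)+1) * ((k:ℝ)+1) ^ e := by
      rw [Real.rpow_add hk10, Real.rpow_one]
    calc ‖a + ↑k‖ * ‖b + ↑k‖ * ((k:ℝ)+1) ^ (1+e)
        = (‖a + ↑k‖ * ‖b + ↑k‖ * ((k:ℝ)+1) ^ e) * ((k:ℝ)+1) := by rw [hsplit]; ring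
      _ ≤ ((k:ℝ) ^ (1+e) * ‖c + ↑k‖) * ((k:ℝ)+1) := by
          apply mul_le_mul_of_nonneg_right key (le_of_lt hk10)
      _ = (k:ℝ) ^ (1+e) * (((k:ℝ)+1) * ‖c + ↑k‖) := by ring
  -- extract K and induct
  obtain ⟨K₀, hK₀⟩ := eventually_atTop.1 hstep
  set K := max K₀ 1 with hK
  have hK1 : 1 ≤ K := le_max_right _ _
  have hKpos : (0:ℝ) < (K:ℝ) := by exact_mod_cast hK1
  have huKpos : (0:ℝ) < (K:ℝ) ^ (-1-e) := Real.rpow_pos_of_pos hKpos _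
  set C : ℝ := ‖Tm a b c K‖ / (K:ℝ) ^ (-1-e) with hCdef
  have hind : ∀ n : ℕ, ‖Tm a b c (K + n)‖ ≤ C * ((K + n : ℕ) : ℝ) ^ (-1-e) := by
    intro n
    induction n with
    | zero =>
      simp only [Nat.add_zero]
      rw [hCdef, div_mul_cancel₀]
      exact ne_of_gt huKpos
    | succ n ih =>
      have hkn : K₀ ≤ K + n := le_trans (le_max_left _ _) (Nat.le_add_right _ _)
      have hstepn := hK₀ (K + n) hkn
      have hupos : (0:ℝ) < ((K + n : ℕ) : ℝ) ^ (-1-e) := by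
        apply Real.rpow_pos_of_pos
        have : 1 ≤ K + n := le_trans hK1 (Nat.le_add_right _ _)
        exact_mod_cast this
      calc ‖Tm a b c (K + n + 1)‖
          ≤ ‖Tm a b c (K + n)‖ * ((((K+n:ℕ):ℝ) + 1) ^ (-1-e) / ((K+n:ℕ):ℝ) ^ (-1-e)) :=
            hstepn
        _ ≤ (C * ((K + n : ℕ) : ℝ) ^ (-1-e)) *
              ((((K+n:ℕ):ℝ) + 1) ^ (-1-e) / ((K+n:ℕ):ℝ) ^ (-1-e)) := by
            apply mul_le_mul_of_nonneg_right ih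
            positivity
        _ = C * (((K+n:ℕ):ℝ) + 1) ^ (-1-e) := by
            field_simp
        _ = C * (((K + n + 1 : ℕ)) : ℝ) ^ (-1-e) := by push_cast; ring_nf
  refine ⟨C, ?_⟩
  filter_upwards [eventually_ge_atTop K] with k hk
  obtain ⟨n, rfl⟩ := Nat.exists_eq_add_of_le hk
  exact hind n

lemma summable_norm_Tm {a b c : ℂ} (hd : 0 < (c - a - b).re) (hC : ∀ i : ℕ, c + i ≠ 0) :
    Summable (fun k => ‖Tm a b c k‖) := by
  obtain ⟨C, hCb⟩ := Tm_bound (a := a) (b := b) (e := (c - a - b).re / 2) (by linarith) (by linarith) hC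
  have hsum : Summable (fun k : ℕ => C * (k : ℝ) ^ (-1 - (c - a - b).re / 2)) :=
    (Real.summable_nat_rpow.2 (by linarith)).mul_left C
  refine hsum.of_norm_bounded_eventually ?_
  rw [Nat.cofinite_eq_atTop]
  filter_upwards [hCb] with k hk
  simpa using hk

lemma summable_Tm {a b c : ℂ} (hd : 0 < (c - a - b).re) (hC : ∀ i : ℕ, c + i ≠ 0) :
    Summable (Tm a b c) :=
  (summable_norm_Tm hd hC).of_norm

lemma Tm_shift {c : ℂ} (hC : ∀ i : ℕ, c + i ≠ 0) (a b : ℂ) (k : ℕ) :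
    c * Tm a b c k = (c + k) * Tm a b (c + 1) k := by
  have h1 : poch c k ≠ 0 := poch_ne_zero hC k
  have h2 : poch (c + 1) k ≠ 0 := by
    apply poch_ne_zero
    intro i
    have := hC (i + 1)
    push_cast at this ⊢
    intro hcon; apply this; rw [← hcon]; ring
  have h3 : ((k.factorial : ℂ)) ≠ 0 := Nat.cast_ne_zero.2 k.factorial_ne_zero
  have hrel : c * poch (c + 1) k = poch c k * (c + k) := by
    rw [← poch_succ', poch_succ]
  rw [Tm, Tm]
  field_simp
  linear_combination poch a k * poch b k * hrel

lemma Tm_g {c : ℂ} (hC : ∀ i : ℕ, c + i ≠ 0) (a b : ℂ) (k : ℕ) :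
    ((k : ℂ) + 1) * (c + k + 1) * Tm a b (c + 1) (k + 1)
      = (a + k) * (b + k) * Tm a b (c + 1) k := by
  have hC' : ∀ i : ℕ, (c + 1) + i ≠ 0 := by
    intro i
    have := hC (i + 1)
    push_cast at this ⊢
    intro hcon; apply this; rw [← hcon]; ring
  have hk1 : ((k : ℂ) + 1) ≠ 0 := by
    have := Nat.cast_ne_zero (R := ℂ).2 (Nat.succ_ne_zero k)
    push_cast at this; exact this
  have hck : (c + 1 + k) ≠ 0 := hC' k
  rw [Tm_succ hC' a b k]
  field_simp
  ring

lemma contiguous {a b c : ℂ} (hd : 0 < (c - a - b).re) (hC : ∀ i : ℕ, c + i ≠ 0) :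
    c * (c - a - b) * ∑' k, Tm a b c k = (c - a) * (c - b) * ∑' k, Tm a b (c + 1) k := by
  set d : ℝ := (c - a - b).re with hdd
  have hC' : ∀ i : ℕ, (c + 1) + i ≠ 0 := by
    intro i
    have := hC (i + 1)
    push_cast at this ⊢
    intro hcon; apply this; rw [← hcon]; ring
  have hd' : 0 < ((c + 1) - a - b).re := by
    have : ((c + 1) - a - b).re = d + 1 := by rw [hdd]; simp; ring
    rw [this]; linarith
  have hs1 : Summable (Tm a b c) := summable_Tm hd hC
  have hs2 : Summable (Tm a b (c + 1)) := summable_Tm hd' hC'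
  set g : ℕ → ℂ := fun k => (k : ℂ) * (c + k) * Tm a b (c + 1) k with hg
  have htel : ∀ k : ℕ, c * (c - a - b) * Tm a b c k - (c - a) * (c - b) * Tm a b (c + 1) k
      = g k - g (k + 1) := by
    intro k
    have h1 := Tm_shift hC a b k
    have h2 := Tm_g hC a b k
    simp only [hg]
    push_cast
    linear_combination (c - a - b) * h1 + h2
  -- g tends to 0
  have hg0 : Tendsto g atTop (𝓝 0) := by
    obtain ⟨C, hCb⟩ := Tm_bound (a := a) (b := b) (c := c + 1) (e := 1 + d / 2)
      (by linarith) (by rw [show ((c+1) - a - b).re = d + 1 by rw [hdd]; simp; ring]; linarith)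
      hC'
    have hbound : ∀ᶠ k : ℕ in atTop,
        ‖g k‖ ≤ ‖c‖ * C * (k : ℝ) ^ (-1 - d / 2) + C * (k : ℝ) ^ (-d / 2) := by
      filter_upwards [hCb, eventually_ge_atTop 1] with k hk hk1
      have hk0 : (0 : ℝ) < k := by exact_mod_cast hk1
      have hCpos : 0 ≤ C * (k:ℝ) ^ (-1 - (1 + d/2)) := le_trans (norm_nonneg _) hk
      have e1 : (k:ℝ) ^ (-1 - d/2) = (k:ℝ) * (k:ℝ) ^ (-1 - (1 + d/2)) := by
        rw [show (-1 - d/2) = 1 + (-1 - (1 + d/2)) by ring, Real.rpow_add hk0,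
          Real.rpow_one]
      have e2 : (k:ℝ) ^ (-d/2) = (k:ℝ) * ((k:ℝ) * (k:ℝ) ^ (-1 - (1 + d/2))) := by
        rw [show (-d/2) = 1 + (1 + (-1 - (1 + d/2))) by ring, Real.rpow_add hk0,
          Real.rpow_add hk0, Real.rpow_one]
      have hnorm : ‖g k‖ = (k : ℝ) * ‖c + k‖ * ‖Tm a b (c+1) k‖ := by
        simp only [hg, norm_mul]
        rw [Complex.norm_natCast]
      rw [hnorm]
      have hck : ‖c + k‖ ≤ ‖c‖ + k := by
        calc ‖c + k‖ ≤ ‖c‖ + ‖(k:ℂ)‖ := norm_add_le _ _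
        _ = ‖c‖ + k := by rw [Complex.norm_natCast]
      calc (k : ℝ) * ‖c + k‖ * ‖Tm a b (c+1) k‖
          ≤ (k : ℝ) * (‖c‖ + k) * (C * (k:ℝ) ^ (-1 - (1 + d/2))) := by
            apply mul_le_mul (by apply mul_le_mul_of_nonneg_left hck (by positivity)) hk
              (norm_nonneg _) (by positivity)
        _ = ‖c‖ * C * (k:ℝ) ^ (-1 - d/2) + C * (k:ℝ) ^ (-d/2) := by
            rw [e1, e2]; ring
    have hlim : Tendsto (fun k : ℕ =>
        ‖c‖ * C * (k : ℝ) ^ (-1 - d / 2) + C * (k : ℝ) ^ (-d / 2)) atTop (𝓝 0) := by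
      have l1 : Tendsto (fun k : ℕ => (k : ℝ) ^ (-1 - d / 2)) atTop (𝓝 0) := by
        have := (tendsto_rpow_neg_atTop (y := 1 + d / 2) (by linarith)).comp
          (tendsto_natCast_atTop_atTop (R := ℝ))
        refine this.congr fun k => ?_
        simp only [Function.comp_apply]
        congr 1; ring
      have l2 : Tendsto (fun k : ℕ => (k : ℝ) ^ (-d / 2)) atTop (𝓝 0) := by
        have := (tendsto_rpow_neg_atTop (y := d / 2) (by linarith)).comp
          (tendsto_natCast_atTop_atTop (R := ℝ))
        refine this.congr fun k => ?_
        simp only [Function.comp_apply]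
        congr 1; ring
      have := ((l1.const_mul (‖c‖ * C)).add (l2.const_mul C))
      simpa using this
    exact squeeze_zero_norm' hbound hlim
  -- telescoping sum
  have hsum3 : Summable (fun k => c * (c - a - b) * Tm a b c k
      - (c - a) * (c - b) * Tm a b (c + 1) k) :=
    (hs1.mul_left _).sub (hs2.mul_left _)
  have hsumtel : Summable (fun k => g k - g (k + 1)) := by
    refine hsum3.congr fun k => ?_
    exact htel k
  have hhs : HasSum (fun k => g k - g (k + 1)) 0 := by
    rw [hsumtel.hasSum_iff_tendsto_nat]
    have hps : ∀ n : ℕ, ∑ i ∈ Finset.range n, (g i - g (i + 1)) = g 0 - g n :=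
      fun n => Finset.sum_range_sub' g n
    have hg00 : g 0 = 0 := by simp [hg]
    refine Tendsto.congr (fun n => (hps n).symm) ?_
    rw [hg00]
    simpa using (tendsto_const_nhds (x := (0:ℂ))).sub hg0
  have key : ∑' k, (c * (c - a - b) * Tm a b c k
      - (c - a) * (c - b) * Tm a b (c + 1) k) = 0 := by
    rw [tsum_congr htel]
    exact hhs.tsum_eq
  rw [Summable.tsum_sub (hs1.mul_left _) (hs2.mul_left _)] at key
  rw [tsum_mul_left, tsum_mul_left] at key
  linear_combination key

lemma iterate_contiguous {a b c : ℂ} (hd : 0 < (c - a - b).re) (hC : ∀ i : ℕ, c + i ≠ 0)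
    (n : ℕ) :
    ∑' k, Tm a b c k =
      (poch (c - a) n * poch (c - b) n / (poch c n * poch (c - a - b) n)) *
        ∑' k, Tm a b (c + n) k := by
  induction n with
  | zero => simp [poch_zero]
  | succ n ih =>
    have hCn : ∀ i : ℕ, (c + n) + i ≠ 0 := by
      intro i
      have := hC (n + i)
      push_cast at this ⊢
      intro hcon; apply this; rw [← hcon]; ring
    have hre : ((c + n) - a - b).re = (c - a - b).re + n := by
      simp [Complex.sub_re, Complex.add_re]; ring
    have hdn : 0 < ((c + n) - a - b).re := by
      rw [hre]; positivity
    have hcont := contiguous hdn hCn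
    have hne1 : (c + (n:ℂ)) ≠ 0 := by simpa using hCn 0
    have hne2 : (c + n - a - b) ≠ 0 := by
      intro h
      rw [h] at hdn; simp at hdn
    have h1 : ∑' k, Tm a b (c + n) k
        = ((c + n - a) * (c + n - b) / ((c + n) * (c + n - a - b)))
          * ∑' k, Tm a b (c + n + 1) k := by
      rw [eq_comm, div_mul_eq_mul_div, div_eq_iff (mul_ne_zero hne1 hne2)]
      linear_combination -hcont
    have hcast : (c + ((n:ℂ) + 1)) = (c + n) + 1 := by ring
    rw [show ((n+1 : ℕ) : ℂ) = (n : ℂ) + 1 by push_cast; ring, hcast]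
    rw [ih, h1, poch_succ, poch_succ, poch_succ, poch_succ, ← mul_assoc,
      div_mul_div_comm]
    have hgoal : (poch (c-a) n * poch (c-b) n * ((c + ↑n - a) * (c + ↑n - b))) /
        (poch c n * poch (c-a-b) n * ((c + ↑n) * (c + ↑n - a - b)))
        = poch (c-a) n * (c - a + ↑n) * (poch (c-b) n * (c - b + ↑n)) /
          (poch c n * (c + ↑n) * (poch (c-a-b) n * (c - a - b + ↑n))) := by
      congr 1 <;> ring
    rw [hgoal]

lemma tendsto_S_shift (a b c : ℂ) :
    Tendsto (fun n : ℕ => ∑' k, Tm a b (c + n) k) atTop (𝓝 1) := by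
  set r : ℝ := ‖a‖ + ‖b‖ + 1 with hr
  have hr0 : (0:ℝ) < r := by positivity
  have hCr : ∀ i : ℕ, (r : ℂ) + i ≠ 0 := by
    intro i h
    have := congrArg Complex.re h
    simp at this
    have hi : (0:ℝ) ≤ i := Nat.cast_nonneg i
    linarith
  have hdr : 0 < ((r:ℂ) - (‖a‖:ℂ) - (‖b‖:ℂ)).re := by
    simp only [Complex.sub_re, Complex.ofReal_re]
    rw [hr]
    linarith
  have hbsum : Summable (fun k => ‖Tm (‖a‖ : ℂ) (‖b‖ : ℂ) (r : ℂ) k‖) :=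
    summable_norm_Tm hdr hCr
  have hnormlb : ∀ (n i : ℕ), ((n:ℝ) + i) - ‖c‖ ≤ ‖c + n + i‖ := by
    intro n i
    have h3 : ‖((n:ℂ) + i)‖ - ‖-c‖ ≤ ‖((n:ℂ) + i) - (-c)‖ := norm_sub_norm_le _ _
    have h4 : ‖((n:ℂ) + i)‖ = (n:ℝ) + i := by
      rw [show ((n:ℂ) + i) = (((n + i : ℕ)) : ℂ) by push_cast; ring,
        Complex.norm_natCast]
      push_cast; ring
    rw [h4, norm_neg] at h3
    calc ((n:ℝ) + i) - ‖c‖ ≤ ‖((n:ℂ) + i) - (-c)‖ := h3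
    _ = ‖c + n + i‖ := by congr 1; ring
  -- pointwise limits
  have hab : ∀ k : ℕ, Tendsto (fun n : ℕ => Tm a b (c + n) k) atTop
      (𝓝 (if k = 0 then 1 else 0)) := by
    intro k
    match k with
    | 0 => simpa [Tm_zero] using (tendsto_const_nhds (x := (1:ℂ)))
    | (k + 1) =>
      simp only [Nat.succ_ne_zero, if_false]
      refine squeeze_zero_norm'
        (a := fun n : ℕ => ‖poch a (k+1)‖ * ‖poch b (k+1)‖ * ((n:ℝ) - ‖c‖)⁻¹) ?_ ?_
      · filter_upwards [eventually_ge_atTop (⌈‖c‖⌉₊ + 1)] with n hn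
        have hnc : ‖c‖ + 1 ≤ (n : ℝ) := by
          have h1 : ‖c‖ ≤ (⌈‖c‖⌉₊ : ℝ) := Nat.le_ceil _
          have h2 : ((⌈‖c‖⌉₊ + 1 : ℕ) : ℝ) ≤ (n:ℝ) := by exact_mod_cast hn
          push_cast at h2
          linarith
        have hfac : ∀ i ∈ Finset.range (k+1), (1:ℝ) ≤ ‖c + n + i‖ := by
          intro i _
          have h5 := hnormlb n i
          have hi : (0:ℝ) ≤ i := Nat.cast_nonneg i
          linarith
        have hprod : (n:ℝ) - ‖c‖ ≤ ‖poch (c + n) (k+1)‖ := by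
          rw [norm_poch]
          have hle : ∀ i ∈ Finset.range (k+1),
              (if i = 0 then (n:ℝ) - ‖c‖ else 1) ≤ ‖c + (n:ℂ) + (i:ℂ)‖ := by
            intro i hi
            by_cases h : i = 0
            · subst h
              rw [if_pos rfl]
              have h5 := hnormlb n 0
              simp only [Nat.cast_zero, add_zero] at h5 ⊢
              linarith
            · rw [if_neg h]
              exact hfac i hi
          have h0le : ∀ i ∈ Finset.range (k+1),
              (0:ℝ) ≤ (if i = 0 then (n:ℝ) - ‖c‖ else 1) := by
            intro i _
            by_cases h : i = 0
            · rw [if_pos h]; linarith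
            · rw [if_neg h]; norm_num
          have h6 := Finset.prod_le_prod h0le hle
          rw [Finset.prod_ite_eq' (Finset.range (k+1)) 0
            (fun _ => (n:ℝ) - ‖c‖)] at h6
          simpa using h6
        have hpos : (0:ℝ) < (n:ℝ) - ‖c‖ := by linarith
        rw [norm_Tm, ← div_eq_mul_inv]
        apply div_le_div₀ (by positivity) (le_refl _) hpos
        calc (n:ℝ) - ‖c‖ ≤ ‖poch (c + n) (k+1)‖ := hprod
        _ ≤ ((k+1).factorial : ℝ) * ‖poch (c + n) (k+1)‖ := by
            apply le_mul_of_one_le_left (norm_nonneg _)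
            exact_mod_cast Nat.one_le_iff_ne_zero.2 (k+1).factorial_ne_zero
      · have h1 : Tendsto (fun n : ℕ => (n:ℝ) - ‖c‖) atTop atTop :=
          tendsto_atTop_add_const_right _ _ tendsto_natCast_atTop_atTop
        have h2 := h1.inv_tendsto_atTop
        have := h2.const_mul (‖poch a (k+1)‖ * ‖poch b (k+1)‖)
        simp only [mul_zero] at this
        refine this.congr fun n => ?_
        simp only [Pi.inv_apply]
  -- uniform bound
  have h_bound : ∀ᶠ n : ℕ in atTop, ∀ k : ℕ,
      ‖Tm a b (c + n) k‖ ≤ ‖Tm (‖a‖ : ℂ) (‖b‖ : ℂ) (r : ℂ) k‖ := by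
    filter_upwards [eventually_ge_atTop (⌈r + ‖c‖⌉₊)] with n hn k
    have hnr : r + ‖c‖ ≤ (n:ℝ) := le_trans (Nat.le_ceil _) (by exact_mod_cast hn)
    rw [norm_Tm, norm_Tm]
    have hnum : ‖poch a k‖ * ‖poch b k‖ ≤ ‖poch (‖a‖:ℂ) k‖ * ‖poch (‖b‖:ℂ) k‖ := by
      have ha' := norm_poch_le a k
      have hb' := norm_poch_le b k
      have hae : ‖poch (‖a‖:ℂ) k‖ = ∏ i ∈ Finset.range k, (‖a‖ + i) := by
        rw [norm_poch]
        refine Finset.prod_congr rfl fun i _ => ?_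
        rw [show (‖a‖ : ℂ) + i = ((‖a‖ + i : ℝ) : ℂ) by push_cast; ring,
          Complex.norm_real, Real.norm_eq_abs, abs_of_nonneg (by positivity)]
      have hbe : ‖poch (‖b‖:ℂ) k‖ = ∏ i ∈ Finset.range k, (‖b‖ + i) := by
        rw [norm_poch]
        refine Finset.prod_congr rfl fun i _ => ?_
        rw [show (‖b‖ : ℂ) + i = ((‖b‖ + i : ℝ) : ℂ) by push_cast; ring,
          Complex.norm_real, Real.norm_eq_abs, abs_of_nonneg (by positivity)]
      rw [hae, hbe]
      exact mul_le_mul ha' hb' (norm_nonneg _) (Finset.prod_nonneg fun i _ => by positivity)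
    have hden : ‖poch (r:ℂ) k‖ ≤ ‖poch (c + n) k‖ := by
      rw [norm_poch, norm_poch]
      apply Finset.prod_le_prod
      · intro i _; positivity
      · intro i _
        have h5 := hnormlb n i
        have hre : ‖(r:ℂ) + i‖ = r + i := by
          rw [show (r : ℂ) + i = ((r + i : ℝ) : ℂ) by push_cast; ring,
            Complex.norm_real, Real.norm_eq_abs, abs_of_nonneg (by positivity)]
        rw [hre]
        have hi : (0:ℝ) ≤ i := Nat.cast_nonneg i
        linarith
    have hdenpos : (0:ℝ) < (k.factorial : ℝ) * ‖poch (r:ℂ) k‖ := by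
      have := poch_ne_zero hCr k
      have h6 : (0:ℝ) < ‖poch (r:ℂ) k‖ := norm_pos_iff.2 this
      have h7 : (0:ℝ) < (k.factorial : ℝ) := by exact_mod_cast k.factorial_pos
      positivity
    apply div_le_div₀ (by positivity) hnum hdenpos
    apply mul_le_mul_of_nonneg_left hden (by positivity)
  have hmain := tendsto_tsum_of_dominated_convergence hbsum hab h_bound
  have htsum1 : ∑' k : ℕ, (if k = 0 then (1:ℂ) else 0) = 1 := by
    rw [tsum_eq_single 0]
    · simp
    · intro k hk; simp [hk]
  rw [htsum1] at hmain
  exact hmain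

lemma tendsto_P {a b c : ℂ} (hd : 0 < (c - a - b).re) (hC : ∀ i : ℕ, c + i ≠ 0) :
    Tendsto (fun n : ℕ => poch (c - a) n * poch (c - b) n /
        (poch c n * poch (c - a - b) n)) atTop
      (𝓝 (Complex.Gamma c * Complex.Gamma (c - a - b) /
        (Complex.Gamma (c - a) * Complex.Gamma (c - b)))) := by
  have hCab : ∀ i : ℕ, (c - a - b) + i ≠ 0 := by
    intro i h
    have := congrArg Complex.re h
    simp only [Complex.add_re, Complex.natCast_re, Complex.zero_re] at this
    have hi : (0:ℝ) ≤ i := Nat.cast_nonneg i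
    linarith
  by_cases hza : Complex.Gamma (c - a) = 0
  · obtain ⟨m, hm⟩ := (Complex.Gamma_eq_zero_iff _).1 hza
    rw [hza, zero_mul, div_zero]
    refine Tendsto.congr' ?_ (tendsto_const_nhds (x := (0:ℂ)))
    filter_upwards [eventually_ge_atTop (m+1)] with n hn
    have hz : poch (c - a) n = 0 :=
      Finset.prod_eq_zero (i := m) (Finset.mem_range.2 (by omega))
        (by rw [hm]; exact neg_add_cancel _)
    rw [hz, zero_mul, zero_div]
  by_cases hzb : Complex.Gamma (c - b) = 0
  · obtain ⟨m, hm⟩ := (Complex.Gamma_eq_zero_iff _).1 hzb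
    rw [hzb, mul_zero, div_zero]
    refine Tendsto.congr' ?_ (tendsto_const_nhds (x := (0:ℂ)))
    filter_upwards [eventually_ge_atTop (m+1)] with n hn
    have hz : poch (c - b) n = 0 :=
      Finset.prod_eq_zero (i := m) (Finset.mem_range.2 (by omega))
        (by rw [hm]; exact neg_add_cancel _)
    rw [hz, mul_zero, zero_div]
  -- main case
  have hlim : Tendsto (fun n : ℕ => Complex.GammaSeq c n * Complex.GammaSeq (c-a-b) n /
      (Complex.GammaSeq (c-a) n * Complex.GammaSeq (c-b) n)) atTop
      (𝓝 (Complex.Gamma c * Complex.Gamma (c - a - b) /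
        (Complex.Gamma (c - a) * Complex.Gamma (c - b)))) :=
    ((Complex.GammaSeq_tendsto_Gamma c).mul (Complex.GammaSeq_tendsto_Gamma _)).div
      ((Complex.GammaSeq_tendsto_Gamma _).mul (Complex.GammaSeq_tendsto_Gamma _))
      (mul_ne_zero hza hzb)
  rw [show (fun n : ℕ => poch (c - a) n * poch (c - b) n /
      (poch c n * poch (c - a - b) n)) = fun n : ℕ => poch (c - a) n * poch (c - b) n /
      (poch c n * poch (c - a - b) n) from rfl]
  rw [← tendsto_add_atTop_iff_nat 1]
  refine Tendsto.congr' ?_ hlim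
  filter_upwards [eventually_ge_atTop 1] with n hn
  have hn0 : (n : ℂ) ≠ 0 := Nat.cast_ne_zero.2 (by omega)
  have hGS : ∀ s : ℂ, Complex.GammaSeq s n = (n:ℂ) ^ s * n.factorial / poch s (n+1) :=
    fun s => rfl
  by_cases hpa : poch (c - a) (n + 1) = 0
  · simp [hGS (c-a), hpa]
  by_cases hpb : poch (c - b) (n + 1) = 0
  · simp [hGS (c-b), hpb]
  have hpc : poch c (n + 1) ≠ 0 := poch_ne_zero hC _
  have hpcab : poch (c - a - b) (n + 1) ≠ 0 := poch_ne_zero hCab _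
  have hfact : ((n.factorial : ℂ)) ≠ 0 := Nat.cast_ne_zero.2 n.factorial_ne_zero
  have hcp : ∀ s : ℂ, (n:ℂ) ^ s ≠ 0 := by
    intro s h
    exact hn0 ((Complex.cpow_eq_zero_iff _ _).1 h).1
  have hpw : (n:ℂ) ^ c * (n:ℂ) ^ (c - a - b) = (n:ℂ) ^ (c - a) * (n:ℂ) ^ (c - b) := by
    rw [← Complex.cpow_add _ _ hn0, ← Complex.cpow_add _ _ hn0]
    congr 1
    ring
  have h1 := hcp (c-a)
  have h2 := hcp (c-b)
  have h3 := hcp c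
  have h4 := hcp (c-a-b)
  rw [hGS, hGS, hGS, hGS]
  field_simp
  linear_combination hpw

/-- Gauss's ₂F₁ summation theorem. -/
theorem gauss_2F1 (a b c : ℂ) (hconv : 0 < (c - a - b).re)
    (hc : ∀ m : ℕ, c ≠ -(m : ℂ)) :
    ∑' k : ℕ, poch a k * poch b k / ((k.factorial : ℂ) * poch c k)
      = Complex.Gamma c * Complex.Gamma (c - a - b) /
        (Complex.Gamma (c - a) * Complex.Gamma (c - b)) := by
  have hC : ∀ i : ℕ, c + (i : ℂ) ≠ 0 := by
    intro i h
    exact hc i (by linear_combination h)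
  have hiter := iterate_contiguous hconv hC
  have h2 : Tendsto (fun n : ℕ => (poch (c - a) n * poch (c - b) n /
      (poch c n * poch (c - a - b) n)) * ∑' k, Tm a b (c + n) k) atTop
      (𝓝 ((Complex.Gamma c * Complex.Gamma (c - a - b) /
        (Complex.Gamma (c - a) * Complex.Gamma (c - b))) * 1)) :=
    (tendsto_P hconv hC).mul (tendsto_S_shift a b c)
  have h3 : Tendsto (fun n : ℕ => (poch (c - a) n * poch (c - b) n /
      (poch c n * poch (c - a - b) n)) * ∑' k, Tm a b (c + n) k) atTop
      (𝓝 (∑' k, Tm a b c k)) :=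
    tendsto_const_nhds.congr fun n => hiter n
  have hfin := tendsto_nhds_unique h3 h2
  rw [mul_one] at hfin
  exact hfin
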